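/- For the truncated normal family TN(μ, σ², a, b) with fixed σ² > 0 and a < b, the CDF F_{μ,σ²}^{[a,b]}(x) satisfies: for each fixed x ∈ (a,b), lim_{μ → −∞} F_{μ,σ²}^{[a,b]}(x) = 1 and lim_{μ → +∞} F_{μ,σ²}^{[a,b]}(x) = 0. Consequently, for any α ∈ (0,1) and any x ∈ (a,b), there exist unique μ_L and μ_U with F_{μ_L,σ²}^{[a,b]}(x) = 1 − α/2 and F_{μ_U,σ²}^{[a,b]}(x) = α/2. -/

import Mathlib

open MeasureTheory ProbabilityTheory Filter

/-- The CDF `Φ` of the standard normal distribution. -/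
noncomputable def stdNormalCDF : ℝ → ℝ := fun x => ProbabilityTheory.cdf (gaussianReal 0 1) x

/-- The CDF of the truncated normal distribution `TN(μ, σ², a, b)`. -/
noncomputable def truncNormalCDF (μ σ a b x : ℝ) : ℝ :=
  (stdNormalCDF ((x - μ) / σ) - stdNormalCDF ((a - μ) / σ)) /
    (stdNormalCDF ((b - μ) / σ) - stdNormalCDF ((a - μ) / σ))

namespace TruncNormalAux

/-- The unnormalized Gaussian kernel. -/
noncomputable def f (σ μ s : ℝ) : ℝ := Real.exp (-((s - μ) / σ) ^ 2 / 2)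

lemma f_pos (σ μ s : ℝ) : 0 < f σ μ s := Real.exp_pos _

lemma continuous_f (σ μ : ℝ) : Continuous (f σ μ) := by
  unfold f; fun_prop

lemma continuous_f2 (σ : ℝ) : Continuous (Function.uncurry fun μ s => f σ μ s) := by
  unfold f Function.uncurry; fun_prop

/-- The unnormalized partial Gaussian integral. -/
noncomputable def E (σ μ c d : ℝ) : ℝ := ∫ s in c..d, f σ μ s

lemma intF (σ μ c d : ℝ) : IntervalIntegrable (f σ μ) volume c d :=
  (continuous_f σ μ).intervalIntegrable c d

lemma E_pos (σ μ : ℝ) {c d : ℝ} (h : c < d) : 0 < E σ μ c d :=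
  intervalIntegral.intervalIntegral_pos_of_pos (intF σ μ c d) (fun s => f_pos σ μ s) h

lemma E_nonneg (σ μ : ℝ) {c d : ℝ} (h : c ≤ d) : 0 ≤ E σ μ c d :=
  intervalIntegral.integral_nonneg h fun s _ => (f_pos σ μ s).le

lemma E_add (σ μ a x b : ℝ) : E σ μ a x + E σ μ x b = E σ μ a b :=
  intervalIntegral.integral_add_adjacent_intervals (intF σ μ a x) (intF σ μ x b)

lemma E_cont (σ c d : ℝ) : Continuous fun μ => E σ μ c d :=
  intervalIntegral.continuous_parametric_intervalIntegral_of_continuous'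
    (continuous_f2 σ) c d

lemma gauss_eq (t : ℝ) :
    gaussianPDFReal 0 1 t = (Real.sqrt (2 * Real.pi))⁻¹ * Real.exp (-t ^ 2 / 2) := by
  simp [gaussianPDFReal]

lemma stdNormalCDF_sub (y z : ℝ) :
    stdNormalCDF z - stdNormalCDF y = ∫ t in y..z, gaussianPDFReal 0 1 t := by
  have hint : Integrable (gaussianPDFReal 0 1) := integrable_gaussianPDFReal 0 1
  have h1 : ∀ w : ℝ, stdNormalCDF w = ∫ t in Set.Iic w, gaussianPDFReal 0 1 t := by
    intro w
    rw [stdNormalCDF, cdf_eq_real, measureReal_def, gaussianReal_apply_eq_integral 0 one_ne_zero,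
      ENNReal.toReal_ofReal (setIntegral_nonneg measurableSet_Iic fun t _ =>
        gaussianPDFReal_nonneg 0 1 t)]
  rw [h1, h1, intervalIntegral.integral_Iic_sub_Iic hint.integrableOn hint.integrableOn]

lemma key_repr {σ : ℝ} (hσ : 0 < σ) (μ c d : ℝ) :
    stdNormalCDF ((d - μ) / σ) - stdNormalCDF ((c - μ) / σ)
      = (σ⁻¹ * (Real.sqrt (2 * Real.pi))⁻¹) * E σ μ c d := by
  rw [stdNormalCDF_sub, sub_div c μ σ, sub_div d μ σ,
    ← intervalIntegral.inv_smul_integral_comp_div_sub (gaussianPDFReal 0 1) σ (μ / σ)]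
  rw [smul_eq_mul, mul_assoc]
  congr 1
  rw [E, ← intervalIntegral.integral_const_mul]
  apply intervalIntegral.integral_congr
  intro s _
  show gaussianPDFReal 0 1 (s / σ - μ / σ) = (Real.sqrt (2 * Real.pi))⁻¹ * f σ μ s
  rw [gauss_eq, ← sub_div]
  rfl

lemma trunc_repr {σ : ℝ} (hσ : 0 < σ) (μ a b x : ℝ) :
    truncNormalCDF μ σ a b x = E σ μ a x / E σ μ a b := by
  have hK : 0 < σ⁻¹ * (Real.sqrt (2 * Real.pi))⁻¹ := by positivity
  rw [truncNormalCDF, key_repr hσ, key_repr hσ, mul_div_mul_left _ _ hK.ne']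

lemma f_cross {σ : ℝ} (hσ : 0 < σ) {μ1 μ2 s u : ℝ} (hμ : μ1 ≤ μ2) (hsu : s ≤ u) :
    f σ μ2 s * f σ μ1 u ≤ f σ μ1 s * f σ μ2 u := by
  unfold f
  rw [← Real.exp_add, ← Real.exp_add, Real.exp_le_exp]
  have key : 0 ≤ ((s - μ2) ^ 2 + (u - μ1) ^ 2) - ((s - μ1) ^ 2 + (u - μ2) ^ 2) := by
    nlinarith [mul_nonneg (sub_nonneg.2 hsu) (sub_nonneg.2 hμ)]
  have h := mul_nonneg key (sq_nonneg σ⁻¹)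
  simp only [div_pow, div_eq_mul_inv]
  nlinarith [h]

lemma f_cross_lt {σ : ℝ} (hσ : 0 < σ) {μ1 μ2 s u : ℝ} (hμ : μ1 < μ2) (hsu : s < u) :
    f σ μ2 s * f σ μ1 u < f σ μ1 s * f σ μ2 u := by
  unfold f
  rw [← Real.exp_add, ← Real.exp_add, Real.exp_lt_exp]
  have key : 0 < ((s - μ2) ^ 2 + (u - μ1) ^ 2) - ((s - μ1) ^ 2 + (u - μ2) ^ 2) := by
    nlinarith [mul_pos (sub_pos.2 hsu) (sub_pos.2 hμ)]
  have h := mul_pos key (show (0:ℝ) < σ⁻¹ ^ 2 by positivity)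
  simp only [div_pow, div_eq_mul_inv]
  nlinarith [h]

/-- monotonicity to the right of the mean: for `μ ≤ p ≤ q`, `f σ μ q ≤ f σ μ p`. -/
lemma f_le_left {σ : ℝ} (hσ : 0 < σ) {μ p q : ℝ} (hμ : μ ≤ p) (hpq : p ≤ q) :
    f σ μ q ≤ f σ μ p := by
  unfold f
  rw [Real.exp_le_exp]
  have h1 : 0 ≤ (p - μ) / σ := div_nonneg (by linarith) hσ.le
  have h2 : (p - μ) / σ ≤ (q - μ) / σ := by gcongr <;> linarith
  have h3 := pow_le_pow_left₀ h1 h2 2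
  linarith

/-- monotonicity to the left of the mean: for `p ≤ q ≤ μ`, `f σ μ p ≤ f σ μ q`. -/
lemma f_le_right {σ : ℝ} (hσ : 0 < σ) {μ p q : ℝ} (hμ : q ≤ μ) (hpq : p ≤ q) :
    f σ μ p ≤ f σ μ q := by
  unfold f
  rw [Real.exp_le_exp]
  have h1 : 0 ≤ (μ - q) / σ := div_nonneg (by linarith) hσ.le
  have h2 : (μ - q) / σ ≤ (μ - p) / σ := by gcongr <;> linarith
  have h3 := pow_le_pow_left₀ h1 h2 2
  have e1 : ((p - μ) / σ) ^ 2 = ((μ - p) / σ) ^ 2 := by ring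
  have e2 : ((q - μ) / σ) ^ 2 = ((μ - q) / σ) ^ 2 := by ring
  linarith

lemma E_cross {σ : ℝ} (hσ : 0 < σ) {a x b μ1 μ2 : ℝ} (hax : a < x) (hxb : x < b)
    (hμ : μ1 < μ2) :
    E σ μ2 a x * E σ μ1 x b < E σ μ1 a x * E σ μ2 x b := by
  set r := f σ μ2 x / f σ μ1 x with hr
  have hr_pos : 0 < r := div_pos (f_pos _ _ _) (f_pos _ _ _)
  have hA : E σ μ2 a x < r * E σ μ1 a x := by
    have hpos : 0 < ∫ s in a..x, (r * f σ μ1 s - f σ μ2 s) := by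
      apply intervalIntegral.intervalIntegral_pos_of_pos_on
      · exact ((continuous_const.mul (continuous_f σ μ1)).sub
          (continuous_f σ μ2)).intervalIntegrable _ _
      · intro s hs
        have h := f_cross_lt hσ hμ hs.2
        rw [sub_pos, hr, div_mul_eq_mul_div, lt_div_iff₀ (f_pos σ μ1 x)]
        nlinarith [h]
      · exact hax
    rw [intervalIntegral.integral_sub
      ((show Continuous fun s => r * f σ μ1 s from
        continuous_const.mul (continuous_f σ μ1)).intervalIntegrable _ _)
      (intF σ μ2 a x), intervalIntegral.integral_const_mul] at hpos
    unfold E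
    linarith [hpos]
  have hB : r * E σ μ1 x b ≤ E σ μ2 x b := by
    rw [E, E, ← intervalIntegral.integral_const_mul]
    apply intervalIntegral.integral_mono_on hxb.le
      ((show Continuous fun s => r * f σ μ1 s from
        continuous_const.mul (continuous_f σ μ1)).intervalIntegrable _ _)
      (intF σ μ2 x b)
    intro u hu
    have h := f_cross hσ hμ.le hu.1
    show r * f σ μ1 u ≤ f σ μ2 u
    rw [hr, div_mul_eq_mul_div, div_le_iff₀ (f_pos σ μ1 x)]
    nlinarith [h]
  calc E σ μ2 a x * E σ μ1 x b < (r * E σ μ1 a x) * E σ μ1 x b :=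
        mul_lt_mul_of_pos_right hA (E_pos σ μ1 hxb)
    _ = E σ μ1 a x * (r * E σ μ1 x b) := by ring
    _ ≤ E σ μ1 a x * E σ μ2 x b :=
        mul_le_mul_of_nonneg_left hB (E_pos σ μ1 hax).le

lemma quot_eq {σ : ℝ} (hσ : 0 < σ) (x m μ : ℝ) :
    f σ μ x / f σ μ m
      = Real.exp ((m ^ 2 - x ^ 2) / (2 * σ ^ 2) + ((x - m) / σ ^ 2) * μ) := by
  unfold f
  rw [← Real.exp_sub]
  congr 1
  field_simp
  ring

end TruncNormalAux

open TruncNormalAux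

theorem truncNormalCDF_limits_and_unique_solutions
    (σ a b x : ℝ) (hσ : 0 < σ) (hab : a < b) (hx : x ∈ Set.Ioo a b) :
    Tendsto (fun μ : ℝ => truncNormalCDF μ σ a b x) atBot (nhds 1) ∧
    Tendsto (fun μ : ℝ => truncNormalCDF μ σ a b x) atTop (nhds 0) ∧
    ∀ α ∈ Set.Ioo (0 : ℝ) 1,
      (∃! μL : ℝ, truncNormalCDF μL σ a b x = 1 - α / 2) ∧
      (∃! μU : ℝ, truncNormalCDF μU σ a b x = α / 2) := by
  obtain ⟨hax, hxb⟩ := hx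
  have repr : ∀ μ, truncNormalCDF μ σ a b x = E σ μ a x / E σ μ a b :=
    fun μ => trunc_repr hσ μ a b x
  have hEab : ∀ μ, 0 < E σ μ a b := fun μ => E_pos σ μ hab
  -- limit at -∞
  have hone : Tendsto (fun μ : ℝ => truncNormalCDF μ σ a b x) atBot (nhds 1) := by
    set m := (a + x) / 2 with hm
    have ham : a < m := by rw [hm]; linarith
    have hmx : m < x := by rw [hm]; linarith
    have key : Tendsto (fun μ => E σ μ x b / E σ μ a b) atBot (nhds 0) := by
      apply squeeze_zero' (g := fun μ => ((b - x) / (m - a)) * (f σ μ x / f σ μ m))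
      · exact Eventually.of_forall fun μ =>
          div_nonneg (E_nonneg σ μ hxb.le) (hEab μ).le
      · filter_upwards [eventually_le_atBot a] with μ hμa
        have h1 : E σ μ x b ≤ (b - x) * f σ μ x := by
          have := intervalIntegral.integral_mono_on hxb.le (intF σ μ x b)
            (intervalIntegrable_const (c := f σ μ x))
            (fun u hu => f_le_left hσ (by linarith [hu.1]) hu.1)
          simpa [E, smul_eq_mul] using this
        have h2 : (m - a) * f σ μ m ≤ E σ μ a b := by
          have h2a : (m - a) * f σ μ m ≤ E σ μ a m := by
            have := intervalIntegral.integral_mono_on ham.le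
              (intervalIntegrable_const (c := f σ μ m)) (intF σ μ a m)
              (fun s hs => f_le_left hσ (by linarith [hs.1]) hs.2)
            simpa [E, smul_eq_mul] using this
          have h2b := E_add σ μ a m b
          have h2c : 0 ≤ E σ μ m b := E_nonneg σ μ (by linarith)
          linarith
        calc E σ μ x b / E σ μ a b ≤ ((b - x) * f σ μ x) / ((m - a) * f σ μ m) :=
              div_le_div₀ (mul_nonneg (by linarith) (f_pos _ _ _).le) h1
                (mul_pos (by linarith) (f_pos _ _ _)) h2
          _ = ((b - x) / (m - a)) * (f σ μ x / f σ μ m) := by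
              rw [mul_div_mul_comm]
      · have hdecay : Tendsto (fun μ : ℝ =>
            (m ^ 2 - x ^ 2) / (2 * σ ^ 2) + ((x - m) / σ ^ 2) * μ) atBot atBot :=
          tendsto_atBot_add_const_left _ _
            (Tendsto.const_mul_atBot (div_pos (by linarith) (by positivity)) tendsto_id)
        have h := (Real.tendsto_exp_atBot.comp hdecay).const_mul ((b - x) / (m - a))
        simp only [Function.comp_def, mul_zero] at h
        refine h.congr fun μ => ?_
        rw [quot_eq hσ]
    have hrw : ∀ μ, truncNormalCDF μ σ a b x = 1 - E σ μ x b / E σ μ a b := by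
      intro μ
      rw [repr μ, eq_sub_iff_add_eq, ← add_div, E_add σ μ a x b,
        div_self (hEab μ).ne']
    simp only [hrw]
    simpa using tendsto_const_nhds.sub key
  -- limit at +∞
  have hzero : Tendsto (fun μ : ℝ => truncNormalCDF μ σ a b x) atTop (nhds 0) := by
    set m := (x + b) / 2 with hm
    have hxm : x < m := by rw [hm]; linarith
    have hmb : m < b := by rw [hm]; linarith
    apply squeeze_zero' (g := fun μ => ((x - a) / (b - m)) * (f σ μ x / f σ μ m))
    · exact Eventually.of_forall fun μ => by
        rw [repr μ]
        exact div_nonneg (E_nonneg σ μ hax.le) (hEab μ).le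
    · filter_upwards [eventually_ge_atTop b] with μ hμb
      rw [repr μ]
      have h1 : E σ μ a x ≤ (x - a) * f σ μ x := by
        have := intervalIntegral.integral_mono_on hax.le (intF σ μ a x)
          (intervalIntegrable_const (c := f σ μ x))
          (fun s hs => f_le_right hσ (by linarith) hs.2)
        simpa [E, smul_eq_mul] using this
      have h2 : (b - m) * f σ μ m ≤ E σ μ a b := by
        have h2a : (b - m) * f σ μ m ≤ E σ μ m b := by
          have := intervalIntegral.integral_mono_on hmb.le
            (intervalIntegrable_const (c := f σ μ m)) (intF σ μ m b)
            (fun u hu => f_le_right hσ (by linarith [hu.2]) hu.1)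
          simpa [E, smul_eq_mul] using this
        have h2b := E_add σ μ a m b
        have h2c : 0 ≤ E σ μ a m := E_nonneg σ μ (by linarith)
        linarith
      calc E σ μ a x / E σ μ a b ≤ ((x - a) * f σ μ x) / ((b - m) * f σ μ m) :=
            div_le_div₀ (mul_nonneg (by linarith) (f_pos _ _ _).le) h1
              (mul_pos (by linarith) (f_pos _ _ _)) h2
        _ = ((x - a) / (b - m)) * (f σ μ x / f σ μ m) := by rw [mul_div_mul_comm]
    · have hdecay : Tendsto (fun μ : ℝ =>
          (m ^ 2 - x ^ 2) / (2 * σ ^ 2) + ((x - m) / σ ^ 2) * μ) atTop atBot := by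
        apply tendsto_atBot_add_const_left
        apply Tendsto.const_mul_atTop_of_neg ?_ tendsto_id
        apply div_neg_of_neg_of_pos (by linarith) (by positivity)
      have h := (Real.tendsto_exp_atBot.comp hdecay).const_mul ((x - a) / (b - m))
      simp only [Function.comp_def, mul_zero] at h
      refine h.congr fun μ => ?_
      rw [quot_eq hσ]
  -- strict antitonicity, continuity, IVT
  have hanti : StrictAnti (fun μ : ℝ => truncNormalCDF μ σ a b x) := by
    intro μ1 μ2 hμ
    simp only
    rw [repr, repr, div_lt_div_iff₀ (hEab μ2) (hEab μ1)]
    have hc := E_cross hσ hax hxb hμ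
    have e1 := E_add σ μ1 a x b
    have e2 := E_add σ μ2 a x b
    nlinarith [hc, E_pos σ μ1 hax, E_pos σ μ2 hax]
  have hcont : Continuous (fun μ : ℝ => truncNormalCDF μ σ a b x) := by
    have heq : (fun μ : ℝ => truncNormalCDF μ σ a b x)
        = fun μ => E σ μ a x / E σ μ a b := funext repr
    rw [heq]
    exact (E_cont σ a x).div (E_cont σ a b) fun μ => (hEab μ).ne'
  have hexists : ∀ y ∈ Set.Ioo (0:ℝ) 1, ∃! μ0 : ℝ, truncNormalCDF μ0 σ a b x = y := by
    intro y hy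
    have h1 : ∀ᶠ μ : ℝ in atBot, y ≤ truncNormalCDF μ σ a b x :=
      hone.eventually (eventually_ge_nhds hy.2)
    have h2 : ∀ᶠ μ : ℝ in atTop, truncNormalCDF μ σ a b x ≤ y :=
      hzero.eventually (eventually_le_nhds hy.1)
    obtain ⟨μ0, hμ0⟩ := intermediate_value_univ₂_eventually₂ hcont continuous_const h2 h1
    exact ⟨μ0, hμ0, fun μ' h' => hanti.injective (h'.trans hμ0.symm)⟩
  refine ⟨hone, hzero, fun α hα => ⟨hexists _ ⟨?_, ?_⟩, hexists _ ⟨?_, ?_⟩⟩⟩ <;>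
    [skip; skip; skip; skip] <;> · obtain ⟨h1, h2⟩ := hα; linarith
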